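/- Let T be an L²-bounded Calderón–Zygmund operator (kernel size and Hölder smoothness with exponent δ), which is hence of weak type (1,1). Then for every cube Q and 0 < λ < 1, the local mean oscillation satisfies ω_λ(Tf; Q) ≤ C(T, λ, n) Σ_{m=0}^∞ 2^{-mδ} (1/|2^m Q|) ∫_{2^m Q} |f(y)| dy. -/

import Mathlib

open Set MeasureTheory ENNReal

/-- The axis-parallel cube centered at `x₀` with sidelength `ℓ`, in Euclidean space. -/
def cubeC {n : ℕ} (x₀ : EuclideanSpace ℝ (Fin n)) (ℓ : ℝ) : Set (EuclideanSpace ℝ (Fin n)) :=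
  {y | ∀ i, x₀ i - ℓ/2 ≤ y i ∧ y i < x₀ i + ℓ/2}

/-- The non-increasing rearrangement `g^*(t) = inf{s > 0 : |{|g| > s}| ≤ t}`. -/
noncomputable def rearr {n : ℕ} (g : EuclideanSpace ℝ (Fin n) → ℝ) (t : ℝ) : ℝ :=
  sInf {s : ℝ | 0 < s ∧ volume {x | s < |g x|} ≤ ENNReal.ofReal t}

/-- The local mean oscillation `ω_λ(g; Q) = inf_{c ∈ ℝ} ((g − c)χ_Q)^*(λ|Q|)`. -/
noncomputable def oscLam {n : ℕ} (lam : ℝ) (g : EuclideanSpace ℝ (Fin n) → ℝ)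
    (Q : Set (EuclideanSpace ℝ (Fin n))) : ℝ :=
  ⨅ c : ℝ, rearr (Q.indicator fun y => g y - c) (lam * (volume Q).toReal)

section CZHelpers
variable {n : ℕ}


lemma cube_eq_preimage (x₀ : EuclideanSpace ℝ (Fin n)) (ℓ : ℝ) :
    cubeC x₀ ℓ = (MeasurableEquiv.toLp 2 (Fin n → ℝ)).symm ⁻¹'
      (Set.univ.pi fun i => Set.Ico (x₀ i - ℓ/2) (x₀ i + ℓ/2)) := by
  ext y
  simp only [cubeC, Set.mem_preimage, Set.mem_pi, Set.mem_univ, forall_true_left,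
    Set.mem_Ico, Set.mem_setOf_eq]
  rfl

lemma msble_pi_Ico (x₀ : EuclideanSpace ℝ (Fin n)) (ℓ : ℝ) :
    MeasurableSet (Set.univ.pi fun i => Set.Ico (x₀ i - ℓ/2) (x₀ i + ℓ/2)) :=
  MeasurableSet.univ_pi fun i => measurableSet_Ico

lemma volume_cube (x₀ : EuclideanSpace ℝ (Fin n)) {ℓ : ℝ} (hℓ : 0 ≤ ℓ) :
    volume (cubeC x₀ ℓ) = ENNReal.ofReal (ℓ ^ n) := by
  rw [cube_eq_preimage,
    (EuclideanSpace.volume_preserving_symm_measurableEquiv_toLp (Fin n)).measure_preimage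
      (msble_pi_Ico x₀ ℓ).nullMeasurableSet, volume_pi_pi]
  have : ∀ i : Fin n, volume (Set.Ico (x₀ i - ℓ/2) (x₀ i + ℓ/2)) = ENNReal.ofReal ℓ := by
    intro i; rw [Real.volume_Ico]; congr 1; ring
  simp only [this, Finset.prod_const, Finset.card_univ, Fintype.card_fin]
  exact (ENNReal.ofReal_pow hℓ n).symm

lemma measurable_cube (x₀ : EuclideanSpace ℝ (Fin n)) (ℓ : ℝ) :
    MeasurableSet (cubeC x₀ ℓ) := by
  rw [cube_eq_preimage]
  exact (MeasurableEquiv.toLp 2 (Fin n → ℝ)).symm.measurable (msble_pi_Ico x₀ ℓ)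

lemma coord_le_dist (x y : EuclideanSpace ℝ (Fin n)) (i : Fin n) :
    |x i - y i| ≤ dist x y := by
  rw [EuclideanSpace.dist_eq]
  calc |x i - y i| = dist (x i) (y i) := (Real.dist_eq _ _).symm
    _ = √(dist (x i) (y i) ^ 2) := by rw [Real.sqrt_sq dist_nonneg]
    _ ≤ √(∑ j, dist (x j) (y j) ^ 2) := Real.sqrt_le_sqrt
        (Finset.single_le_sum (f := fun j => dist (x j) (y j) ^ 2)
          (fun j _ => sq_nonneg _) (Finset.mem_univ i))

lemma dist_le_of_coords (x y : EuclideanSpace ℝ (Fin n)) {b : ℝ} (hb : 0 ≤ b)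
    (h : ∀ i, |x i - y i| ≤ b) : dist x y ≤ Real.sqrt n * b := by
  rw [EuclideanSpace.dist_eq]
  have : ∑ i, dist (x i) (y i) ^ 2 ≤ n * b ^ 2 := by
    calc ∑ i, dist (x i) (y i) ^ 2 ≤ ∑ _i : Fin n, b ^ 2 := by
          apply Finset.sum_le_sum
          intro i _
          have := h i
          rw [Real.dist_eq]
          nlinarith [abs_nonneg (x i - y i)]
      _ = n * b ^ 2 := by simp [mul_comm]
  calc √(∑ i, dist (x i) (y i) ^ 2) ≤ √((n : ℝ) * b ^ 2) := Real.sqrt_le_sqrt this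
    _ = Real.sqrt n * b := by
        rw [Real.sqrt_mul (Nat.cast_nonneg n), Real.sqrt_sq hb]

-- membership facts
lemma mem_cube_self (x₀ : EuclideanSpace ℝ (Fin n)) {ℓ : ℝ} (hℓ : 0 < ℓ) :
    x₀ ∈ cubeC x₀ ℓ := fun i => by constructor <;> nlinarith

lemma dist_le_of_mem_cube {x₀ x : EuclideanSpace ℝ (Fin n)} {ℓ : ℝ} (hℓ : 0 < ℓ)
    (hx : x ∈ cubeC x₀ ℓ) : dist x x₀ ≤ Real.sqrt n * (ℓ/2) := by
  apply dist_le_of_coords _ _ (by positivity)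
  intro i
  obtain ⟨h1, h2⟩ := hx i
  rw [abs_le]
  constructor <;> [linarith; linarith]

lemma dist_ge_of_not_mem_cube {x₀ y : EuclideanSpace ℝ (Fin n)} {L : ℝ}
    (hy : y ∉ cubeC x₀ L) : L / 2 ≤ dist x₀ y := by
  rcases le_or_gt L 0 with hL | hL
  · linarith [dist_nonneg (x := x₀) (y := y)]
  simp only [cubeC, Set.mem_setOf_eq, not_forall] at hy
  obtain ⟨i, hi⟩ := hy
  rw [not_and_or] at hi
  have : L / 2 ≤ |x₀ i - y i| := by
    rcases hi with h | h
    · push_neg at h; rw [abs_of_nonneg (by linarith)]; linarith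
    · push_neg at h; rw [abs_of_nonpos (by linarith)]; linarith
  exact this.trans (coord_le_dist x₀ y i)

lemma cube_mono (x₀ : EuclideanSpace ℝ (Fin n)) {L L' : ℝ} (h : L ≤ L') :
    cubeC x₀ L ⊆ cubeC x₀ L' := by
  intro y hy i
  exact ⟨by linarith [(hy i).1], by linarith [(hy i).2]⟩

lemma cube_subset_interior {x₀ : EuclideanSpace ℝ (Fin n)} {ℓ L : ℝ} (hℓ : 0 < ℓ)
    (hL : ℓ < L) : cubeC x₀ ℓ ⊆ interior (cubeC x₀ L) := by
  have hO : IsOpen (⋂ i, {y : EuclideanSpace ℝ (Fin n) | |y i - x₀ i| < L/2}) := by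
    apply isOpen_iInter_of_finite
    intro i
    have hc : Continuous fun y : EuclideanSpace ℝ (Fin n) => y i :=
      (EuclideanSpace.proj (𝕜 := ℝ) (i : Fin n)).continuous
    have : {y : EuclideanSpace ℝ (Fin n) | |y i - x₀ i| < L/2} =
        (fun y : EuclideanSpace ℝ (Fin n) => y i) ⁻¹' {t : ℝ | |t - x₀ i| < L/2} := rfl
    rw [this]
    exact (isOpen_lt (by continuity) continuous_const).preimage hc
  apply subset_trans _ (interior_maximal _ hO)
  · intro y hy
    simp only [Set.mem_iInter, Set.mem_setOf_eq]
    intro i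
    obtain ⟨h1, h2⟩ := hy i
    rw [abs_lt]; constructor <;> linarith
  · intro y hy i
    simp only [Set.mem_iInter, Set.mem_setOf_eq] at hy
    have := abs_lt.mp (hy i)
    constructor <;> linarith [this.1, this.2]

lemma rearr_nonneg (g : EuclideanSpace ℝ (Fin n) → ℝ) (t : ℝ) : 0 ≤ rearr g t :=
  Real.sInf_nonneg (fun _ hb => hb.1.le)

lemma rearr_le {g : EuclideanSpace ℝ (Fin n) → ℝ} {t r : ℝ} (hr : 0 ≤ r)
    (h : ∀ s, r < s → volume {x | s < |g x|} ≤ ENNReal.ofReal t) : rearr g t ≤ r := by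
  apply _root_.le_of_forall_pos_le_add
  intro ε hε
  apply csInf_le ⟨0, fun b hb => hb.1.le⟩
  exact ⟨by linarith, h _ (by linarith)⟩

lemma oscLam_le_rearr (lam : ℝ) (g : EuclideanSpace ℝ (Fin n) → ℝ)
    (Q : Set (EuclideanSpace ℝ (Fin n))) (c0 : ℝ) :
    oscLam lam g Q ≤ rearr (Q.indicator fun y => g y - c0) (lam * (volume Q).toReal) := by
  apply ciInf_le ⟨0, ?_⟩ c0
  rintro r ⟨c', rfl⟩
  exact rearr_nonneg _ _

section Kcont
variable (c δ : ℝ) (K : EuclideanSpace ℝ (Fin n) → EuclideanSpace ℝ (Fin n) → ℝ)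

lemma K_contOn (hδ : 0 < δ)
    (hsmooth : ∀ x x' y : EuclideanSpace ℝ (Fin n), x ≠ y → x' ≠ y →
      dist x x' < dist x y / 2 →
      |K x y - K x' y| + |K y x - K y x'| ≤ c * dist x x' ^ δ / dist x y ^ ((n : ℝ) + δ))
    (x : EuclideanSpace ℝ (Fin n)) :
    ContinuousOn (fun y => K x y) {x}ᶜ := by
  intro y hy
  have hyx : y ≠ x := hy
  have hd : 0 < dist y x := dist_pos.2 hyx
  have key : ∀ y' : EuclideanSpace ℝ (Fin n), dist y' y < dist y x / 2 →
      |K x y' - K x y| ≤ c * dist y y' ^ δ / dist y x ^ ((n : ℝ) + δ) := by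
    intro y' hy'
    have hy'x : y' ≠ x := by
      intro hcon
      rw [hcon] at hy'
      rw [dist_comm] at hy'
      linarith
    have := hsmooth y y' x hyx hy'x (by rwa [dist_comm y' y] at hy' )
    have h2 : |K x y - K x y'| ≤ c * dist y y' ^ δ / dist y x ^ ((n : ℝ) + δ) := by
      have h0 : 0 ≤ |K y x - K y' x| := abs_nonneg _
      linarith [this, abs_nonneg (K y x - K y' x)]
    rwa [abs_sub_comm] at h2
  rw [ContinuousWithinAt, tendsto_iff_dist_tendsto_zero]
  apply tendsto_of_tendsto_of_tendsto_of_le_of_le'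
    (g := fun _ => (0:ℝ))
    (h := fun y' => c * dist y y' ^ δ / dist y x ^ ((n : ℝ) + δ))
  · exact tendsto_const_nhds
  · -- h tends to 0
    have h1 : Filter.Tendsto (fun y' : EuclideanSpace ℝ (Fin n) => dist y y')
        (nhdsWithin y {x}ᶜ) (nhds 0) := by
      have : Filter.Tendsto (fun y' : EuclideanSpace ℝ (Fin n) => dist y y') (nhds y)
          (nhds (dist y y)) := (continuous_const.dist continuous_id).tendsto y
      rw [dist_self] at this
      exact this.mono_left nhdsWithin_le_nhds
    have h2 : Filter.Tendsto (fun t : ℝ => c * t ^ δ / dist y x ^ ((n : ℝ) + δ))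
        (nhds 0) (nhds 0) := by
      have h3 : ContinuousAt (fun t : ℝ => t ^ δ) 0 :=
        Real.continuousAt_rpow_const 0 δ (Or.inr hδ.le)
      have h4 := (h3.const_smul c).div_const (dist y x ^ ((n : ℝ) + δ))
      have h5 : (fun t : ℝ => c * t ^ δ / dist y x ^ ((n : ℝ) + δ)) 0 = 0 := by
        simp [Real.zero_rpow hδ.ne']
      simpa [ContinuousAt, h5, smul_eq_mul] using h4
    exact h2.comp h1
  · exact Filter.Eventually.of_forall fun y' => dist_nonneg
  · -- eventual bound
    have hball : Metric.ball y (dist y x / 2) ∈ nhdsWithin y {x}ᶜ :=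
      nhdsWithin_le_nhds (Metric.ball_mem_nhds y (by linarith))
    filter_upwards [hball] with y' hy'
    rw [Metric.mem_ball] at hy'
    exact key y' hy'
end Kcont

lemma two_rpow_le_two_rpow {a b : ℝ} (h : a ≤ b) : (2:ℝ) ^ a ≤ (2:ℝ) ^ b :=
  Real.rpow_le_rpow_left_iff one_lt_two |>.2 h

lemma key_alg (n j : ℕ) {c δ ℓ d D : ℝ} (hc : 0 ≤ c) (hδ : 0 < δ) (hδ1 : δ ≤ 1)
    (hl : 0 < ℓ) (hd : 0 ≤ d) (hdu : d ≤ 2^n * ℓ) (hD : 2^(n+j) * ℓ ≤ D) :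
    c * d ^ δ / D ^ ((n:ℝ) + δ) ≤
      (c * 2^(4*n+3)) * ((2:ℝ) ^ (-((n+j+3 : ℕ) : ℝ) * δ) / ((2^(n+j+3) : ℝ) * ℓ)^n) := by
  set r : ℝ := 2^(n+j) * ℓ with hr_def
  have hr : (0:ℝ) < r := by positivity
  have hu : (0:ℝ) < 2^n * ℓ := by positivity
  have hexp : (0:ℝ) ≤ (n:ℝ) + δ := by positivity
  have h2 : c * (2^n*ℓ) ^ δ / r ^ ((n:ℝ) + δ) = c * (2:ℝ) ^ (-(j:ℝ)*δ) / r ^ n := by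
    rw [Real.rpow_add hr, Real.rpow_natCast]
    have h3 : ((2:ℝ)^n*ℓ) ^ δ = ((2:ℝ)^n*ℓ/r)^δ * r ^ δ := by
      rw [Real.div_rpow hu.le hr.le, div_mul_cancel₀]
      exact (Real.rpow_pos_of_pos hr δ).ne'
    have h4 : (2:ℝ)^n*ℓ/r = (2:ℝ)^(-(j:ℝ)) := by
      rw [Real.rpow_neg (by norm_num), Real.rpow_natCast, hr_def, pow_add]
      field_simp
    have h5 : ((2:ℝ)^(-(j:ℝ)))^δ = (2:ℝ)^(-(j:ℝ)*δ) :=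
      (Real.rpow_mul (by norm_num) _ _).symm
    rw [h3, h4, h5]
    field_simp
  calc c * d ^ δ / D ^ ((n:ℝ) + δ)
      ≤ c * (2^n*ℓ) ^ δ / r ^ ((n:ℝ) + δ) := by
        apply div_le_div₀ (by positivity)
          (mul_le_mul_of_nonneg_left (Real.rpow_le_rpow hd hdu hδ.le) hc)
          (Real.rpow_pos_of_pos hr _)
          (Real.rpow_le_rpow hr.le hD hexp)
    _ = c * (2:ℝ) ^ (-(j:ℝ)*δ) / r ^ n := h2
    _ ≤ c * ((2:ℝ)^(n+3) * (2:ℝ) ^ (-((n+j+3 : ℕ) : ℝ) * δ)) / r^n := by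
        gcongr
        have h9 : (2:ℝ)^(n+3) * (2:ℝ) ^ (-((n+j+3 : ℕ) : ℝ) * δ)
            = (2:ℝ) ^ (((n+3:ℕ):ℝ) + -((n+j+3 : ℕ) : ℝ) * δ) := by
          rw [Real.rpow_add (by norm_num), Real.rpow_natCast]
        rw [h9]
        apply two_rpow_le_two_rpow
        push_cast
        nlinarith [Nat.cast_nonneg (α := ℝ) n, Nat.cast_nonneg (α := ℝ) j]
    _ = (c * 2^(4*n+3)) * ((2:ℝ) ^ (-((n+j+3 : ℕ) : ℝ) * δ) / ((2^(n+j+3) : ℝ) * ℓ)^n) := by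
        have h6 : ((2^(n+j+3) : ℝ) * ℓ)^n = 8^n * r^n := by
          rw [hr_def, ← mul_pow]
          congr 1
          rw [show n+j+3 = 3 + (n+j) by omega, pow_add]
          norm_num
          ring
        have h8 : (2:ℝ)^(4*n+3) = 8^n * 2^(n+3) := by
          rw [show (8:ℝ) = 2^3 by norm_num, ← pow_mul, ← pow_add]
          congr 1; omega
        rw [h6, h8]
        field_simp

lemma pow_mul_le_pow_mul {ℓ : ℝ} (hℓ : 0 ≤ ℓ) {a b : ℕ} (h : a ≤ b) :
    (2:ℝ)^a * ℓ ≤ 2^b * ℓ :=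
  mul_le_mul_of_nonneg_right (pow_le_pow_right₀ (by norm_num) h) hℓ

lemma mem_cube_of_dist_lt {x₀ y : EuclideanSpace ℝ (Fin n)} {L : ℝ}
    (h : dist x₀ y < L/2) : y ∈ cubeC x₀ L := by
  intro i
  have h2 := (coord_le_dist x₀ y i).trans_lt h
  have := abs_lt.mp h2
  constructor <;> [linarith [this.2]; linarith [this.1]]

lemma annuli_cover (x₀ : EuclideanSpace ℝ (Fin n)) {ℓ : ℝ} (hℓ : 0 < ℓ) (m₀ : ℕ) :
    (cubeC x₀ (2^m₀ * ℓ))ᶜ =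
      ⋃ j : ℕ, (cubeC x₀ (2^(m₀+j+1) * ℓ) \ cubeC x₀ (2^(m₀+j) * ℓ)) := by
  ext y
  simp only [Set.mem_compl_iff, Set.mem_iUnion, Set.mem_diff]
  constructor
  · intro hy
    have hex : ∃ m : ℕ, y ∈ cubeC x₀ (2^m * ℓ) := by
      obtain ⟨m, hm⟩ := pow_unbounded_of_one_lt ((2 * dist x₀ y + 1)/ℓ) (one_lt_two (α := ℝ))
      refine ⟨m, mem_cube_of_dist_lt ?_⟩
      rw [div_lt_iff₀ hℓ] at hm
      nlinarith [dist_nonneg (x := x₀) (y := y)]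
    classical
    let M := Nat.find hex
    have hM : y ∈ cubeC x₀ (2^M * ℓ) := Nat.find_spec hex
    have hMgt : m₀ < M := by
      by_contra hcon
      push_neg at hcon
      exact hy (cube_mono x₀ (pow_mul_le_pow_mul hℓ.le (by omega)) hM)
    refine ⟨M - m₀ - 1, ?_, ?_⟩
    · rw [show m₀ + (M - m₀ - 1) + 1 = M by omega]; exact hM
    · rw [show m₀ + (M - m₀ - 1) = M - 1 by omega]
      exact Nat.find_min hex (by omega)
  · rintro ⟨j, hj1, hj2⟩ hcon
    exact hj2 (cube_mono x₀ (pow_mul_le_pow_mul hℓ.le (by omega)) hcon)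

lemma annuli_disj (x₀ : EuclideanSpace ℝ (Fin n)) {ℓ : ℝ} (hℓ : 0 < ℓ) (m₀ : ℕ) :
    Pairwise (Function.onFun Disjoint
      fun j : ℕ => cubeC x₀ (2^(m₀+j+1) * ℓ) \ cubeC x₀ (2^(m₀+j) * ℓ)) := by
  have key : ∀ i j : ℕ, i < j → Disjoint
      (cubeC x₀ (2^(m₀+i+1) * ℓ) \ cubeC x₀ (2^(m₀+i) * ℓ))
      (cubeC x₀ (2^(m₀+j+1) * ℓ) \ cubeC x₀ (2^(m₀+j) * ℓ)) := by
    intro i j hij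
    apply Set.disjoint_left.mpr
    rintro y ⟨hy1, _⟩ ⟨_, hy4⟩
    exact hy4 (cube_mono x₀ (pow_mul_le_pow_mul hℓ.le (by omega)) hy1)
  intro i j hij
  rcases lt_or_gt_of_ne hij with h | h
  · exact key i j h
  · exact (key j i h).symm
end CZHelpers

set_option maxHeartbeats 2000000 in
/-- Let `T` be an `L²`-bounded Calderón–Zygmund operator, hence of weak type `(1,1)`. Then for
every cube `Q` and `0 < λ < 1`,
`ω_λ(Tf; Q) ≤ C(T,λ,n) Σ_{m≥0} 2^{-mδ}(1/|2^m Q|)∫_{2^m Q}|f|`. -/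
theorem stmt12 (n : ℕ) (c δ A lam : ℝ) (hc : 0 < c) (hδ : 0 < δ) (hδ1 : δ ≤ 1)
    (hA : 0 < A) (hlam0 : 0 < lam) (hlam1 : lam < 1)
    (K : EuclideanSpace ℝ (Fin n) → EuclideanSpace ℝ (Fin n) → ℝ)
    (T : (EuclideanSpace ℝ (Fin n) → ℝ) → (EuclideanSpace ℝ (Fin n) → ℝ))
    (hsize : ∀ x y, x ≠ y → |K x y| ≤ c / dist x y ^ (n : ℝ))
    (hsmooth : ∀ x x' y, x ≠ y → x' ≠ y → dist x x' < dist x y / 2 →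
      |K x y - K x' y| + |K y x - K y x'| ≤ c * dist x x' ^ δ / dist x y ^ ((n : ℝ) + δ))
    (hrep : ∀ f, Integrable f → ∀ x ∉ tsupport f, T f x = ∫ y, K x y * f y)
    (hadd : ∀ f g, Integrable f → Integrable g →
      ∀ᵐ x ∂volume, T (f + g) x = T f x + T g x)
    (hL2 : ∀ f, MemLp f 2 volume → eLpNorm (T f) 2 volume ≤
      ENNReal.ofReal A * eLpNorm f 2 volume)
    (hweak : ∀ f, Integrable f → ∀ t : ℝ, 0 < t →
      ENNReal.ofReal t * volume {x | t < |T f x|} ≤ ENNReal.ofReal (A * ∫ y, |f y|)) :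
    ∃ C : ℝ, 0 < C ∧
      ∀ f, Integrable f → ∀ (x₀ : EuclideanSpace ℝ (Fin n)) (ℓ : ℝ), 0 < ℓ →
        oscLam lam (T f) (cubeC x₀ ℓ) ≤
          C * ∑' m : ℕ, (2:ℝ)^(-(m:ℝ)*δ) *
            ((∫ y in cubeC x₀ (2^m * ℓ), |f y|) / (volume (cubeC x₀ (2^m * ℓ))).toReal) := by
  classical
  set m₀ : ℕ := n + 2 with hm₀
  set C₁ : ℝ := A * 2^m₀ * 2^(m₀*n) / lam with hC₁
  set C₂ : ℝ := c * 2^(4*n+3) with hC₂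
  have hC₁pos : 0 < C₁ := by rw [hC₁]; positivity
  have hC₂pos : 0 < C₂ := by rw [hC₂]; positivity
  refine ⟨C₁ + C₂, by positivity, ?_⟩
  intro f hf x₀ ℓ hℓ
  -- the series
  set term : ℕ → ℝ := fun m => (2:ℝ)^(-(m:ℝ)*δ) *
      ((∫ y in cubeC x₀ (2^m * ℓ), |f y|) / (volume (cubeC x₀ (2^m * ℓ))).toReal) with hterm
  set I : ℕ → ℝ := fun m => ∫ y in cubeC x₀ (2^m * ℓ), |f y| with hI
  have hvolm : ∀ m : ℕ, (volume (cubeC x₀ (2^m * ℓ))).toReal = (2^m * ℓ)^n := by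
    intro m
    rw [volume_cube x₀ (by positivity)]
    exact ENNReal.toReal_ofReal (by positivity)
  have htermeq : ∀ m : ℕ, term m = (2:ℝ)^(-(m:ℝ)*δ) * (I m / (2^m * ℓ)^n) := by
    intro m; rw [hterm]; simp only []; rw [hvolm m, hI]
  have hInonneg : ∀ m, 0 ≤ I m := by
    intro m; rw [hI]; exact integral_nonneg fun y => abs_nonneg _
  have htermno : ∀ m, 0 ≤ term m := by
    intro m
    rw [htermeq m]
    apply mul_nonneg (Real.rpow_nonneg (by norm_num) _)
      (div_nonneg (hInonneg m) (by positivity))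
  have hIle : ∀ m, I m ≤ ∫ y, |f y| := by
    intro m; rw [hI]
    exact setIntegral_le_integral hf.abs (Filter.Eventually.of_forall fun y => abs_nonneg _)
  have hsummable : Summable term := by
    have hgeom : Summable (fun m : ℕ => ((2:ℝ)^(-δ))^m * ((∫ y, |f y|) / ℓ^n)) := by
      apply Summable.mul_right
      apply summable_geometric_of_lt_one (by positivity)
      rw [Real.rpow_neg (by norm_num)]
      apply inv_lt_one_of_one_lt₀
      exact Real.one_lt_rpow_iff_of_pos (by norm_num) |>.2 (Or.inl ⟨by norm_num, hδ⟩)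
    have hle : ∀ m : ℕ, term m ≤ ((2:ℝ)^(-δ))^m * ((∫ y, |f y|) / ℓ^n) := by
      intro m
      rw [htermeq m]
      have hpow : (2:ℝ)^(-(m:ℝ)*δ) = ((2:ℝ)^(-δ))^m := by
        rw [← Real.rpow_natCast ((2:ℝ)^(-δ)) m, ← Real.rpow_mul (by norm_num)]
        congr 1; ring
      rw [hpow]
      apply mul_le_mul_of_nonneg_left _ (by positivity)
      apply div_le_div₀ (integral_nonneg fun y => abs_nonneg _) (hIle m) (by positivity)
      exact pow_le_pow_left₀ hℓ.le
        (le_mul_of_one_le_left hℓ.le (one_le_pow₀ (by norm_num))) n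
    exact Summable.of_nonneg_of_le htermno hle hgeom
  have hStotno : 0 ≤ ∑' m, term m := tsum_nonneg htermno
  -- cubes and split of f
  set Q : Set (EuclideanSpace ℝ (Fin n)) := cubeC x₀ ℓ with hQ
  set S : Set (EuclideanSpace ℝ (Fin n)) := cubeC x₀ (2^m₀ * ℓ) with hSdef
  have hSmeas : MeasurableSet S := measurable_cube x₀ _
  set f₁ : EuclideanSpace ℝ (Fin n) → ℝ := S.indicator f with hf₁
  set f₂ : EuclideanSpace ℝ (Fin n) → ℝ := Sᶜ.indicator f with hf₂
  have hif₁ : Integrable f₁ := hf.indicator hSmeas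
  have hif₂ : Integrable f₂ := hf.indicator hSmeas.compl
  have hsplit : f₁ + f₂ = f := Set.indicator_self_add_compl S f
  have hf₂zero : ∀ y ∈ S, f₂ y = 0 := by
    intro y hy; rw [hf₂]; exact Set.indicator_of_notMem (by simpa using hy) f
  have hf₂eq : ∀ y ∉ S, f₂ y = f y := by
    intro y hy; rw [hf₂]; exact Set.indicator_of_mem (by simpa using hy) f
  -- geometry
  have hsq : Real.sqrt n ≤ 2^n := by
    have h1 : (n:ℝ) ≤ ((2:ℝ)^n)^2 := by
      calc (n:ℝ) ≤ (2:ℝ)^n := by exact_mod_cast (Nat.lt_two_pow_self (n := n)).le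
        _ ≤ ((2:ℝ)^n)^2 := by nlinarith [one_le_pow₀ (a := (2:ℝ)) (n := n) (by norm_num)]
    calc Real.sqrt n ≤ Real.sqrt (((2:ℝ)^n)^2) := Real.sqrt_le_sqrt h1
      _ = 2^n := Real.sqrt_sq (by positivity)
  have hdx : ∀ x ∈ Q, dist x x₀ ≤ 2^n * ℓ / 2 := by
    intro x hx
    calc dist x x₀ ≤ Real.sqrt n * (ℓ/2) := dist_le_of_mem_cube hℓ hx
      _ ≤ 2^n * (ℓ/2) := mul_le_mul_of_nonneg_right hsq (by positivity)
      _ = 2^n * ℓ / 2 := by ring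
  have hgeo : ∀ x ∈ Q, ∀ (j : ℕ), ∀ y, y ∉ cubeC x₀ (2^(m₀+j) * ℓ) →
      x ≠ y ∧ x₀ ≠ y ∧ dist x x₀ < dist x y / 2 ∧ 2^(n+j) * ℓ ≤ dist x y := by
    intro x hx j y hy
    have hu : (0:ℝ) < 2^(n+j) * ℓ := by positivity
    have hR : 2^(m₀+j) * ℓ / 2 ≤ dist x₀ y := dist_ge_of_not_mem_cube hy
    have hRval : (2:ℝ)^(m₀+j) * ℓ / 2 = 2 * (2^(n+j) * ℓ) := by
      rw [hm₀, show n+2+j = (n+j)+2 by omega, pow_add]; ring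
    rw [hRval] at hR
    have hd : dist x x₀ ≤ 2^n * ℓ / 2 := hdx x hx
    have hd' : dist x x₀ ≤ 2^(n+j) * ℓ / 2 := by
      have := pow_mul_le_pow_mul hℓ.le (show n ≤ n+j by omega) (ℓ := ℓ)
      linarith
    have htri : dist x₀ y ≤ dist x₀ x + dist x y := dist_triangle _ _ _
    have hcomm : dist x₀ x = dist x x₀ := dist_comm _ _
    have hdist_xy : 2^(n+j) * ℓ ≤ dist x y := by linarith
    refine ⟨?_, ?_, by linarith, hdist_xy⟩
    · intro hcon
      rw [hcon, dist_self] at hdist_xy; linarith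
    · intro hcon
      rw [hcon, dist_self] at hR; linarith
  -- representation and integrability of the far part
  have hQS : Q ⊆ interior S := by
    rw [hQ, hSdef]
    apply cube_subset_interior hℓ
    have h2 : (2:ℝ) ≤ 2^m₀ := by
      calc (2:ℝ) = 2^1 := (pow_one 2).symm
        _ ≤ 2^m₀ := pow_le_pow_right₀ (by norm_num) (by omega)
    nlinarith
  have hTf₂ : ∀ x ∈ Q, T f₂ x = ∫ y, K x y * f₂ y := by
    intro x hx
    apply hrep f₂ hif₂ x
    intro hmem
    have h1 : tsupport f₂ ⊆ (interior S)ᶜ := by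
      rw [← closure_compl]
      apply closure_mono
      rw [hf₂]
      exact Set.support_indicator_subset
    exact h1 hmem (hQS hx)
  have hKbound : ∀ x ∈ Q, ∀ y, |K x y * f₂ y| ≤ (c / (2^n * ℓ) ^ (n:ℝ)) * |f₂ y| := by
    intro x hx y
    by_cases hy : y ∈ S
    · rw [hf₂zero y hy]; simp
    · have hy' : y ∉ cubeC x₀ (2^(m₀+0) * ℓ) := by
        simpa [hSdef] using hy
      obtain ⟨hxy, -, -, hdxy⟩ := hgeo x hx 0 y hy'
      have hdxy' : 2^n * ℓ ≤ dist x y := by simpa using hdxy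
      have h1 := hsize x y hxy
      have h2 : c / dist x y ^ (n:ℝ) ≤ c / (2^n * ℓ) ^ (n:ℝ) := by
        apply div_le_div_of_nonneg_left hc.le (Real.rpow_pos_of_pos (by positivity) _)
        exact Real.rpow_le_rpow (by positivity) hdxy' (by positivity)
      rw [abs_mul]
      exact mul_le_mul_of_nonneg_right (h1.trans h2) (abs_nonneg _)
  have hg_int : ∀ x ∈ Q, Integrable (fun y => K x y * f₂ y) := by
    intro x hx
    have hxS : x ∈ S := interior_subset (hQS hx)
    have haesm : AEStronglyMeasurable (fun y => K x y * f₂ y) volume := by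
      have h1 : ContinuousOn (fun y => K x y) Sᶜ := by
        apply (K_contOn c δ K hδ hsmooth x).mono
        intro y hy
        simp only [Set.mem_compl_iff, Set.mem_singleton_iff]
        rintro rfl
        exact hy hxS
      have h2 : AEMeasurable (fun y => K x y * f y) (volume.restrict Sᶜ) :=
        (h1.aemeasurable hSmeas.compl).mul (hf.aemeasurable.restrict)
      have h3 : (fun y => K x y * f₂ y) = Sᶜ.indicator (fun y => K x y * f y) := by
        funext y
        by_cases hy : y ∈ S
        · rw [Set.indicator_of_notMem (by simpa using hy), hf₂zero y hy, mul_zero]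
        · rw [Set.indicator_of_mem (by simpa using hy), hf₂eq y hy]
      rw [h3]
      exact ((aemeasurable_indicator_iff hSmeas.compl).2 h2).aestronglyMeasurable
    apply Integrable.mono' ((hif₂.abs).const_mul (c / (2^n * ℓ) ^ (n:ℝ))) haesm
    filter_upwards with y
    exact hKbound x hx y
  -- deterministic bound on the far part
  have hx₀Q : x₀ ∈ Q := mem_cube_self x₀ hℓ
  have hshiftsumm : Summable (fun j : ℕ => term (m₀ + j + 1)) := by
    have h1 : Summable (fun j : ℕ => term (j + (m₀ + 1))) :=
      (summable_nat_add_iff (m₀+1)).2 hsummable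
    have h2 : (fun j : ℕ => term (m₀ + j + 1)) = (fun j : ℕ => term (j + (m₀ + 1))) := by
      funext j; congr 1; omega
    rw [h2]; exact h1
  have hdet : ∀ x ∈ Q, |T f₂ x - T f₂ x₀| ≤ C₂ * ∑' m, term m := by
    intro x hx
    rw [hTf₂ x hx, hTf₂ x₀ hx₀Q]
    have hgi := hg_int x hx
    have hgi₀ := hg_int x₀ hx₀Q
    rw [← integral_sub hgi hgi₀]
    set φ : EuclideanSpace ℝ (Fin n) → ℝ := fun y => ‖K x y * f₂ y - K x₀ y * f₂ y‖ with hφ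
    have hφint : Integrable φ := (hgi.sub hgi₀).norm
    set A_ : ℕ → Set (EuclideanSpace ℝ (Fin n)) :=
      fun j => cubeC x₀ (2^(m₀+j+1) * ℓ) \ cubeC x₀ (2^(m₀+j) * ℓ) with hA_
    have hAmeas : ∀ j, MeasurableSet (A_ j) :=
      fun j => (measurable_cube _ _).diff (measurable_cube _ _)
    have hcov : Sᶜ = ⋃ j, A_ j := by
      rw [hSdef, hA_]; exact annuli_cover x₀ hℓ m₀
    have hφzero : ∀ y ∈ S, φ y = 0 := by
      intro y hy; rw [hφ]; simp only []; rw [hf₂zero y hy]; simp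
    have hHasSum : HasSum (fun j => ∫ y in A_ j, φ y) (∫ y in ⋃ j, A_ j, φ y) :=
      hasSum_integral_iUnion hAmeas (by rw [hA_]; exact annuli_disj x₀ hℓ m₀)
        hφint.integrableOn
    have hann : ∀ j : ℕ, ∫ y in A_ j, φ y ≤ C₂ * term (m₀+j+1) := by
      intro j
      set m : ℕ := m₀ + j + 1 with hm
      have hmn : m = n + j + 3 := by rw [hm, hm₀]; omega
      set coef : ℝ := C₂ * ((2:ℝ)^(-((m:ℕ):ℝ)*δ) / ((2^m : ℝ) * ℓ)^n) with hcoef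
      have hcoefno : 0 ≤ coef := by
        rw [hcoef]
        exact mul_nonneg hC₂pos.le (div_nonneg (Real.rpow_nonneg (by norm_num) _) (by positivity))
      have hKb : ∀ y ∈ A_ j, φ y ≤ coef * |f y| := by
        intro y hy
        rw [hA_] at hy
        obtain ⟨hy1, hy2⟩ := hy
        obtain ⟨hxy, hx₀y, hcond, hdxy⟩ := hgeo x hx j y hy2
        have hs := hsmooth x x₀ y hxy hx₀y hcond
        have hK1 : |K x y - K x₀ y| ≤ c * dist x x₀ ^ δ / dist x y ^ ((n:ℝ)+δ) :=
          le_trans (le_add_of_nonneg_right (abs_nonneg _)) hs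
        have hd2 : dist x x₀ ≤ 2^n * ℓ := by
          have := hdx x hx; have : (0:ℝ) < 2^n * ℓ := by positivity
          linarith [hdx x hx]
        have hK2 := key_alg n j hc.le hδ hδ1 hℓ dist_nonneg hd2 hdxy
        have hK3 : c * dist x x₀ ^ δ / dist x y ^ ((n:ℝ)+δ) ≤ coef := by
          rw [hcoef, hC₂]
          calc c * dist x x₀ ^ δ / dist x y ^ ((n:ℝ)+δ)
              ≤ (c * 2^(4*n+3)) * ((2:ℝ) ^ (-((n+j+3 : ℕ) : ℝ) * δ) / ((2^(n+j+3) : ℝ) * ℓ)^n) := hK2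
            _ = c * 2^(4*n+3) * ((2:ℝ)^(-((m:ℕ):ℝ)*δ) / ((2^m : ℝ) * ℓ)^n) := by rw [hmn]
        have hy2' : y ∉ S := by
          rw [hSdef]
          intro hcon
          exact hy2 (cube_mono x₀ (pow_mul_le_pow_mul hℓ.le (by omega)) hcon)
        have hfyeq : f₂ y = f y := hf₂eq y hy2'
        rw [hφ]
        simp only []
        rw [show K x y * f₂ y - K x₀ y * f₂ y = (K x y - K x₀ y) * f₂ y by ring,
          Real.norm_eq_abs, abs_mul, hfyeq]
        exact mul_le_mul_of_nonneg_right (hK1.trans hK3) (abs_nonneg _)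
      calc ∫ y in A_ j, φ y ≤ ∫ y in A_ j, coef * |f y| :=
            setIntegral_mono_on hφint.integrableOn
              ((hf.abs.const_mul coef).integrableOn) (hAmeas j) hKb
        _ = coef * ∫ y in A_ j, |f y| := integral_const_mul coef _
        _ ≤ coef * I m := by
            apply mul_le_mul_of_nonneg_left _ hcoefno
            rw [hI]
            apply setIntegral_mono_set (hf.abs.integrableOn)
              (Filter.Eventually.of_forall fun y => abs_nonneg _)
            exact HasSubset.Subset.eventuallyLE (by rw [hA_]; exact Set.diff_subset)
        _ = C₂ * term m := by
            rw [htermeq m, hcoef]; ring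
    calc |∫ y, (K x y * f₂ y - K x₀ y * f₂ y)|
        ≤ ∫ y, φ y := by
          rw [hφ]
          exact norm_integral_le_integral_norm (fun y => K x y * f₂ y - K x₀ y * f₂ y)
      _ = ∫ y in Sᶜ, φ y := by
          rw [← integral_indicator hSmeas.compl]
          congr 1
          funext y
          by_cases hy : y ∈ S
          · rw [Set.indicator_of_notMem (by simpa using hy), hφzero y hy]
          · rw [Set.indicator_of_mem (by simpa using hy)]
      _ = ∑' j, ∫ y in A_ j, φ y := by
          rw [hcov]
          exact integral_iUnion hAmeas (by rw [hA_]; exact annuli_disj x₀ hℓ m₀)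
            hφint.integrableOn
      _ ≤ ∑' j, C₂ * term (m₀+j+1) :=
          Summable.tsum_le_tsum hann hHasSum.summable (hshiftsumm.mul_left C₂)
      _ = C₂ * ∑' j, term (m₀+j+1) := tsum_mul_left
      _ ≤ C₂ * ∑' m, term m := by
          apply mul_le_mul_of_nonneg_left _ hC₂pos.le
          have hinj : Function.Injective (fun j : ℕ => m₀ + j + 1) := by
            intro a b h
            simpa using h
          apply Summable.tsum_le_tsum_of_inj (fun j => m₀ + j + 1)
            hinj (fun k _ => htermno k) (fun j => le_rfl)
            hshiftsumm hsummable
  -- weak-type part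
  set c₀ : ℝ := T f₂ x₀ with hc₀
  have hae : ∀ᵐ x2 ∂volume, T f x2 = T f₁ x2 + T f₂ x2 := by
    have h := hadd f₁ f₂ hif₁ hif₂
    rwa [hsplit] at h
  have hIf₁ : ∫ y, |f₁ y| = I m₀ := by
    rw [hf₁, hI]
    have h1 : (fun y => |S.indicator f y|) = S.indicator (fun y => |f y|) := by
      funext y
      by_cases hy : y ∈ S
      · rw [Set.indicator_of_mem hy, Set.indicator_of_mem hy]
      · rw [Set.indicator_of_notMem hy, Set.indicator_of_notMem hy, abs_zero]
    rw [h1, integral_indicator hSmeas, hSdef]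
  set s₀ : ℝ := A * I m₀ / (lam * ℓ^n) with hs₀
  have hs₀no : 0 ≤ s₀ := by
    rw [hs₀]
    exact div_nonneg (mul_nonneg hA.le (hInonneg m₀)) (by positivity)
  have hQvol : (volume Q).toReal = ℓ^n := by
    rw [hQ, volume_cube x₀ hℓ.le]
    exact ENNReal.toReal_ofReal (by positivity)
  have hrearr : rearr (Q.indicator fun y => T f y - c₀) (lam * (volume Q).toReal)
      ≤ s₀ + C₂ * ∑' m, term m := by
    have hC₂St : 0 ≤ C₂ * ∑' m, term m := mul_nonneg hC₂pos.le hStotno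
    apply rearr_le (by linarith)
    intro s hs
    set t' : ℝ := s - C₂ * ∑' m, term m with ht'
    have ht'pos : s₀ < t' := by rw [ht']; linarith
    have ht'0 : 0 < t' := lt_of_le_of_lt hs₀no ht'pos
    have hsub : {x2 | s < |Q.indicator (fun y => T f y - c₀) x2|} ⊆
        {x2 | t' < |T f₁ x2|} ∪ {x2 | ¬ (T f x2 = T f₁ x2 + T f₂ x2)} := by
      intro x2 hx2
      simp only [Set.mem_setOf_eq] at hx2
      by_cases hN : T f x2 = T f₁ x2 + T f₂ x2
      · left
        have hx2Q : x2 ∈ Q := by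
          by_contra hcon
          rw [Set.indicator_of_notMem hcon] at hx2
          rw [abs_zero] at hx2
          linarith
        rw [Set.indicator_of_mem hx2Q] at hx2
        have hdet2 := hdet x2 hx2Q
        simp only [Set.mem_setOf_eq]
        have habs : |T f x2 - c₀| ≤ |T f₁ x2| + |T f₂ x2 - T f₂ x₀| := by
          rw [hN, hc₀]
          calc |T f₁ x2 + T f₂ x2 - T f₂ x₀|
              = |T f₁ x2 + (T f₂ x2 - T f₂ x₀)| := by ring_nf
            _ ≤ |T f₁ x2| + |T f₂ x2 - T f₂ x₀| := abs_add_le _ _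
        rw [ht']
        linarith
      · right; exact hN
    have hnull : volume {x2 | ¬ (T f x2 = T f₁ x2 + T f₂ x2)} = 0 := hae
    have hw := hweak f₁ hif₁ t' ht'0
    rw [hIf₁] at hw
    have hAI : A * I m₀ ≤ t' * (lam * ℓ^n) := by
      have hpos : (0:ℝ) < lam * ℓ^n := by positivity
      have he : A * I m₀ = s₀ * (lam * ℓ^n) := by
        rw [hs₀]; field_simp
      rw [he]
      exact mul_le_mul_of_nonneg_right ht'pos.le hpos.le
    have h2 : ENNReal.ofReal t' * volume {x2 | t' < |T f₁ x2|} ≤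
        ENNReal.ofReal t' * ENNReal.ofReal (lam * ℓ^n) := by
      apply hw.trans
      rw [← ENNReal.ofReal_mul ht'0.le]
      exact ENNReal.ofReal_le_ofReal hAI
    have h3 := (ENNReal.mul_le_mul_iff_right
      (ENNReal.ofReal_pos.2 ht'0).ne' ENNReal.ofReal_ne_top).1 h2
    calc volume {x2 | s < |Q.indicator (fun y => T f y - c₀) x2|}
        ≤ volume ({x2 | t' < |T f₁ x2|} ∪ {x2 | ¬ (T f x2 = T f₁ x2 + T f₂ x2)}) :=
          measure_mono hsub
      _ ≤ volume {x2 | t' < |T f₁ x2|} + volume {x2 | ¬ (T f x2 = T f₁ x2 + T f₂ x2)} :=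
          measure_union_le _ _
      _ = volume {x2 | t' < |T f₁ x2|} := by rw [hnull, add_zero]
      _ ≤ ENNReal.ofReal (lam * (volume Q).toReal) := by rw [hQvol]; exact h3
  -- conclusion
  have hs₀le : s₀ ≤ C₁ * term m₀ := by
    rw [htermeq m₀, hs₀, hC₁]
    have hre : A * 2^m₀ * 2^(m₀*n) / lam * ((2:ℝ)^(-(m₀:ℝ)*δ) * (I m₀ / (2^m₀ * ℓ)^n))
        = (A * I m₀ / (lam * ℓ^n)) * (2^m₀ * (2:ℝ)^(-(m₀:ℝ)*δ)) := by
      rw [mul_pow, ← pow_mul]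
      field_simp
    rw [hre]
    have hone : (1:ℝ) ≤ 2^m₀ * (2:ℝ)^(-(m₀:ℝ)*δ) := by
      have h1 : ((2:ℝ)^m₀ : ℝ) = (2:ℝ)^((m₀:ℕ):ℝ) := (Real.rpow_natCast 2 m₀).symm
      rw [h1, ← Real.rpow_add (by norm_num)]
      rw [show (1:ℝ) = (2:ℝ)^(0:ℝ) by rw [Real.rpow_zero]]
      apply two_rpow_le_two_rpow
      nlinarith [Nat.cast_nonneg (α := ℝ) m₀]
    nlinarith [div_nonneg (mul_nonneg hA.le (hInonneg m₀)) (by positivity : (0:ℝ) ≤ lam * ℓ^n)]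
  have htermle : term m₀ ≤ ∑' m, term m := Summable.le_tsum hsummable m₀ (fun j _ => htermno j)
  calc oscLam lam (T f) Q
      ≤ rearr (Q.indicator fun y => T f y - c₀) (lam * (volume Q).toReal) :=
        oscLam_le_rearr lam (T f) Q c₀
    _ ≤ s₀ + C₂ * ∑' m, term m := hrearr
    _ ≤ C₁ * ∑' m, term m + C₂ * ∑' m, term m := by
        have : s₀ ≤ C₁ * ∑' m, term m :=
          hs₀le.trans (mul_le_mul_of_nonneg_left htermle hC₁pos.le)
        linarith
    _ = (C₁ + C₂) * ∑' m, term m := by ring
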